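/- arXiv:2306.04278 — 3 statements merged into one kernel-verified Lean document; each statement's English description precedes it below -/
import Mathlib

section
/- Let f and f_1, f_2, … be measurable functions from [0,1] to [0,1]. Then the following are equivalent: (i) f_n → f in L^p([0,1]) for some p ∈ [1,∞); (ii) f_n → f in L^p([0,1]) for every p ∈ [1,∞); (iii) the pushforward measures (x ↦ (x, f_n(x)))_# Leb converge weakly to (x ↦ (x, f(x)))_# Leb as probability measures on [0,1]². -/
open MeasureTheory Filter

/-- For measurable functions `f_n, f : [0,1] → [0,1]`, convergence in `L^p` for
some `p ∈ [1,∞)`, convergence in `L^p` for all `p ∈ [1,∞)`, and weak convergence of the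
pushforward measures `(x ↦ (x, f_n(x)))_# Leb` to `(x ↦ (x, f(x)))_# Leb` are all equivalent. -/
theorem lp_convergence_tfae_pushforward_weak_convergence
    (f : ℕ → ℝ → ℝ) (g : ℝ → ℝ)
    (hf : ∀ n, Measurable (f n)) (hg : Measurable g)
    (hfmem : ∀ n, ∀ x ∈ Set.Icc (0:ℝ) 1, f n x ∈ Set.Icc (0:ℝ) 1)
    (hgmem : ∀ x ∈ Set.Icc (0:ℝ) 1, g x ∈ Set.Icc (0:ℝ) 1) :
    List.TFAE
      [ (∃ p : ℝ, 1 ≤ p ∧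
          Tendsto (fun n => eLpNorm (f n - g) (ENNReal.ofReal p)
              (volume.restrict (Set.Icc (0:ℝ) 1))) atTop (nhds 0)),
        (∀ p : ℝ, 1 ≤ p →
          Tendsto (fun n => eLpNorm (f n - g) (ENNReal.ofReal p)
              (volume.restrict (Set.Icc (0:ℝ) 1))) atTop (nhds 0)),
        (∀ F : BoundedContinuousFunction (ℝ × ℝ) ℝ,
          Tendsto (fun n => ∫ z, F z ∂(Measure.map (fun x => (x, f n x))
                (volume.restrict (Set.Icc (0:ℝ) 1)))) atTop
            (nhds (∫ z, F z ∂(Measure.map (fun x => (x, g x))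
                (volume.restrict (Set.Icc (0:ℝ) 1)))))) ] := by
  set μ : Measure ℝ := volume.restrict (Set.Icc (0:ℝ) 1) with hμdef
  have hprob : IsProbabilityMeasure μ := ⟨by simp [hμdef, Real.volume_Icc]⟩
  -- a.e. bounds
  have hbd : ∀ n, ∀ᵐ x ∂μ, ‖(f n - g) x‖ ≤ 1 := by
    intro n
    filter_upwards [ae_restrict_mem measurableSet_Icc] with x hx
    obtain ⟨h1, h2⟩ := hfmem n x hx
    obtain ⟨h3, h4⟩ := hgmem x hx
    simp only [Pi.sub_apply, Real.norm_eq_abs]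
    rw [abs_sub_le_iff]
    constructor <;> linarith
  have hint : ∀ n, Integrable (f n - g) μ := fun n =>
    (integrable_const (1:ℝ)).mono' ((hf n).sub hg).aestronglyMeasurable (hbd n)
  have hgbd : ∀ᵐ x ∂μ, ‖g x‖ ≤ 1 := by
    filter_upwards [ae_restrict_mem measurableSet_Icc] with x hx
    obtain ⟨h3, h4⟩ := hgmem x hx
    rw [Real.norm_eq_abs, abs_le]; constructor <;> linarith
  have hgint : Integrable g μ := (integrable_const (1:ℝ)).mono' hg.aestronglyMeasurable hgbd
  -- the L¹ identity
  have hL1eq : ∀ n, eLpNorm (f n - g) 1 μ = ENNReal.ofReal (∫ x, |f n x - g x| ∂μ) := by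
    intro n
    rw [eLpNorm_one_eq_lintegral_enorm, ← ofReal_integral_norm_eq_lintegral_enorm (hint n)]
    simp [Real.norm_eq_abs]
  -- the real L¹ convergence statement
  set A : Prop := Tendsto (fun n => ∫ x, |f n x - g x| ∂μ) atTop (nhds 0) with hAdef
  have hA1 : A → Tendsto (fun n => eLpNorm (f n - g) 1 μ) atTop (nhds 0) := by
    intro hA
    have h := ENNReal.tendsto_ofReal hA
    simp only [ENNReal.ofReal_zero] at h
    exact h.congr fun n => (hL1eq n).symm
  have h1A : Tendsto (fun n => eLpNorm (f n - g) 1 μ) atTop (nhds 0) → A := by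
    intro h
    have h2 : Tendsto (fun n => (eLpNorm (f n - g) 1 μ).toReal) atTop (nhds (0:ℝ)) := by
      have := (ENNReal.tendsto_toReal (by simp : (0:ENNReal) ≠ ⊤)).comp h
      simpa [Function.comp_def] using this
    refine h2.congr fun n => ?_
    rw [hL1eq n, ENNReal.toReal_ofReal (integral_nonneg fun x => abs_nonneg _)]
  -- eLpNorm comparison lemmas
  have hple : ∀ p : ℝ, 1 ≤ p → ∀ n,
      eLpNorm (f n - g) (ENNReal.ofReal p) μ ≤ (eLpNorm (f n - g) 1 μ) ^ (1/p) := by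
    intro p hp n
    have hp0 : (ENNReal.ofReal p) ≠ 0 := by
      simp only [ne_eq, ENNReal.ofReal_eq_zero, not_le]; linarith
    rw [eLpNorm_eq_lintegral_rpow_enorm_toReal hp0 ENNReal.ofReal_ne_top,
      eLpNorm_one_eq_lintegral_enorm, ENNReal.toReal_ofReal (by linarith)]
    refine ENNReal.rpow_le_rpow ?_ (by positivity)
    refine lintegral_mono_ae ?_
    filter_upwards [hbd n] with x hx
    have hx1 : (‖(f n - g) x‖₊ : ENNReal) ≤ 1 := by
      rw [← ENNReal.coe_one, ENNReal.coe_le_coe, ← NNReal.coe_le_coe]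
      simpa using hx
    calc (‖(f n - g) x‖₊ : ENNReal) ^ p ≤ (‖(f n - g) x‖₊ : ENNReal) ^ (1:ℝ) :=
          ENNReal.rpow_le_rpow_of_exponent_ge hx1 hp
      _ = _ := ENNReal.rpow_one _
  have h1lep : ∀ p : ℝ, 1 ≤ p → ∀ n,
      eLpNorm (f n - g) 1 μ ≤ eLpNorm (f n - g) (ENNReal.ofReal p) μ := fun p hp n =>
    eLpNorm_le_eLpNorm_of_exponent_le (by exact_mod_cast ENNReal.one_le_ofReal.mpr hp)
      ((hf n).sub hg).aestronglyMeasurable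
  -- eLpNorm₁ → 0 implies statement 2
  have key2 : Tendsto (fun n => eLpNorm (f n - g) 1 μ) atTop (nhds 0) →
      ∀ p : ℝ, 1 ≤ p → Tendsto (fun n => eLpNorm (f n - g) (ENNReal.ofReal p) μ)
        atTop (nhds 0) := by
    intro h1 p hp
    have hub : Tendsto (fun n => (eLpNorm (f n - g) 1 μ) ^ (1/p)) atTop (nhds 0) := by
      have := h1.ennrpow_const (1/p)
      rwa [ENNReal.zero_rpow_of_pos (by positivity)] at this
    exact tendsto_of_tendsto_of_tendsto_of_le_of_le tendsto_const_nhds hub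
      (fun n => zero_le) (fun n => hple p hp n)
  -- A implies the weak convergence statement 3
  have keyA3 : A → ∀ F : BoundedContinuousFunction (ℝ × ℝ) ℝ,
      Tendsto (fun n => ∫ z, F z ∂(Measure.map (fun x => (x, f n x)) μ)) atTop
        (nhds (∫ z, F z ∂(Measure.map (fun x => (x, g x)) μ))) := by
    intro hA F
    have hmeas : ∀ n, AEMeasurable (fun x => (x, f n x)) μ :=
      fun n => (measurable_id.prodMk (hf n)).aemeasurable
    have hgm : AEMeasurable (fun x => (x, g x)) μ := (measurable_id.prodMk hg).aemeasurable
    have heq : ∀ n, ∫ z, F z ∂(Measure.map (fun x => (x, f n x)) μ)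
        = ∫ x, F (x, f n x) ∂μ := fun n =>
      integral_map (hmeas n) F.continuous.aestronglyMeasurable
    have heqg : ∫ z, F z ∂(Measure.map (fun x => (x, g x)) μ) = ∫ x, F (x, g x) ∂μ :=
      integral_map hgm F.continuous.aestronglyMeasurable
    rw [heqg]
    simp only [heq]
    -- convergence in measure
    have hmeas' : TendstoInMeasure μ f atTop g :=
      tendstoInMeasure_of_tendsto_eLpNorm (p := 1) one_ne_zero
        (fun n => (hf n).aestronglyMeasurable) hg.aestronglyMeasurable (hA1 hA)
    refine tendsto_of_subseq_tendsto fun ns hns => ?_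
    have hsub : TendstoInMeasure μ (fun n => f (ns n)) atTop g := fun ε hε =>
      (hmeas' ε hε).comp hns
    obtain ⟨ms, -, hms⟩ := hsub.exists_seq_tendsto_ae
    refine ⟨ms, ?_⟩
    refine tendsto_integral_of_dominated_convergence (fun _ => ‖F‖)
      (fun i => F.continuous.comp_aestronglyMeasurable
        (aestronglyMeasurable_id.prodMk (hf (ns (ms i))).aestronglyMeasurable))
      (integrable_const _) (fun i => Eventually.of_forall fun x => F.norm_coe_le_norm _)
      ?_
    filter_upwards [hms] with x hx
    exact (F.continuous.tendsto (x, g x)).comp (tendsto_const_nhds.prodMk_nhds hx)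
  -- statement 3 implies A
  have key3A : (∀ F : BoundedContinuousFunction (ℝ × ℝ) ℝ,
      Tendsto (fun n => ∫ z, F z ∂(Measure.map (fun x => (x, f n x)) μ)) atTop
        (nhds (∫ z, F z ∂(Measure.map (fun x => (x, g x)) μ)))) → A := by
    intro h3
    have hreg : μ.Regular := by infer_instance
    rw [hAdef, Metric.tendsto_atTop]
    intro ε hε
    obtain ⟨G, -, hGapprox, hGcont, hGint⟩ :=
      hgint.exists_hasCompactSupport_integral_sub_le (show (0:ℝ) < ε/4 by linarith)
    -- the test function
    set Φ : ℝ × ℝ → ℝ := fun z => min |z.2 - G z.1| 1 with hΦdef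
    have hΦcont : Continuous Φ :=
      Continuous.min ((continuous_snd.sub (hGcont.comp continuous_fst)).abs) continuous_const
    have hΦbd : ∀ z, ‖Φ z‖ ≤ 1 := by
      intro z
      rw [Real.norm_eq_abs, abs_le]
      refine ⟨?_, min_le_right _ _⟩
      exact le_trans (by norm_num) (le_min (abs_nonneg _) zero_le_one)
    set F : BoundedContinuousFunction (ℝ × ℝ) ℝ :=
      BoundedContinuousFunction.ofNormedAddCommGroup Φ hΦcont 1 hΦbd with hFdef
    have hFapp : ∀ z, F z = Φ z := fun z => rfl
    have hconv := h3 F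
    have hmeas : ∀ n, AEMeasurable (fun x => (x, f n x)) μ :=
      fun n => (measurable_id.prodMk (hf n)).aemeasurable
    have hgm : AEMeasurable (fun x => (x, g x)) μ := (measurable_id.prodMk hg).aemeasurable
    rw [integral_map hgm F.continuous.aestronglyMeasurable] at hconv
    have hconv' : Tendsto (fun n => ∫ x, min |f n x - G x| 1 ∂μ) atTop
        (nhds (∫ x, min |g x - G x| 1 ∂μ)) := by
      refine Tendsto.congr (fun n => ?_) hconv
      rw [integral_map (hmeas n) F.continuous.aestronglyMeasurable]
      rfl
    -- integrability facts
    have hGgint : Integrable (fun x => |g x - G x|) μ := (hgint.sub hGint).abs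
    have hGG : ∫ x, |g x - G x| ∂μ ≤ ε/4 := by
      refine le_trans (le_of_eq ?_) hGapprox
      simp [Real.norm_eq_abs]
    have hming : Integrable (fun x => min |g x - G x| 1) μ :=
      (integrable_const (1:ℝ)).mono' (((hg.sub hGcont.measurable).abs).min
        measurable_const).aestronglyMeasurable (Eventually.of_forall fun x => by
          rw [Real.norm_eq_abs, abs_of_nonneg (le_min (abs_nonneg _) zero_le_one)]
          exact min_le_right _ _)
    have hlim_le : ∫ x, min |g x - G x| 1 ∂μ ≤ ε/4 :=
      le_trans (integral_mono_ae hming hGgint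
        (Eventually.of_forall fun x => min_le_left _ _)) hGG
    have hev : ∀ᶠ n in atTop, ∫ x, min |f n x - G x| 1 ∂μ < ε/2 :=
      hconv'.eventually_lt_const (by linarith)
    obtain ⟨N, hN⟩ := eventually_atTop.mp hev
    refine ⟨N, fun n hn => ?_⟩
    have hminint : Integrable (fun x => min |f n x - G x| 1) μ :=
      (integrable_const (1:ℝ)).mono' (((hf n).sub hGcont.measurable).abs.min
        measurable_const).aestronglyMeasurable (Eventually.of_forall fun x => by
          rw [Real.norm_eq_abs, abs_of_nonneg (le_min (abs_nonneg _) zero_le_one)]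
          exact min_le_right _ _)
    have hptwise : ∀ᵐ x ∂μ, |f n x - g x| ≤ min |f n x - G x| 1 + |g x - G x| := by
      filter_upwards [hbd n] with x hx
      simp only [Pi.sub_apply, Real.norm_eq_abs] at hx
      rcases le_or_gt |f n x - G x| 1 with h | h
      · rw [min_eq_left h]
        calc |f n x - g x| = |(f n x - G x) + (G x - g x)| := by rw [sub_add_sub_cancel]
          _ ≤ |f n x - G x| + |G x - g x| := abs_add_le _ _
          _ = |f n x - G x| + |g x - G x| := by rw [abs_sub_comm (G x) (g x)]
      · rw [min_eq_right h.le]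
        have : (0:ℝ) ≤ |g x - G x| := abs_nonneg _
        linarith
    have hI : ∫ x, |f n x - g x| ∂μ ≤ ∫ x, min |f n x - G x| 1 ∂μ + ∫ x, |g x - G x| ∂μ := by
      rw [← integral_add hminint hGgint]
      refine integral_mono_ae ?_ (hminint.add hGgint) hptwise
      · have := (hint n).abs
        refine this.congr (Eventually.of_forall fun x => ?_)
        simp
    have hfin := hN n hn
    rw [Real.dist_eq, sub_zero, abs_of_nonneg (integral_nonneg fun x => abs_nonneg _)]
    linarith
  -- assemble
  tfae_have 2 → 1 := fun h => ⟨1, le_rfl, h 1 le_rfl⟩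
  tfae_have 1 → 2 := by
    rintro ⟨p, hp, hconv⟩
    refine key2 ?_
    exact tendsto_of_tendsto_of_tendsto_of_le_of_le tendsto_const_nhds hconv
      (fun n => zero_le) (fun n => h1lep p hp n)
  tfae_have 2 → 3 := fun h2 => keyA3 (h1A (by simpa using h2 1 le_rfl))
  tfae_have 3 → 2 := fun h3 => key2 (hA1 (key3A h3))
  tfae_finish
end

section
/- For all x, y, z ∈ [0,1], the three quantities i(x,y), i(y,z), i(x,z) can be labeled a, b, c so that a = b ≤ c; in other words, the minimum of the three is attained by at least two of them. Moreover, if i(x,y) = i(y,z) < ∞, then either (x ≺ y and z ≺ y) or (y ≺ x and y ≺ z). -/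
open MeasureTheory

/-- `I(x,y) = (min(x,y), max(x,y)]`. -/
def gapInterval (x y : ℝ) : Set ℝ := Set.Ioc (min x y) (max x y)

/-- `i(x,y) = inf { j ≥ 1 : u_j ∈ I(x,y) } ∈ ℕ ∪ {∞}` (with `inf ∅ = ⊤`). -/
noncomputable def firstIdx (u : ℕ → ℝ) (x y : ℝ) : ℕ∞ :=
  sInf ((fun j : ℕ => (j : ℕ∞)) '' {j : ℕ | 1 ≤ j ∧ u j ∈ gapInterval x y})

/-- `x ≺ y` iff `i(x,y) < ∞` and `(y − x) · s_{i(x,y)} > 0`. -/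
def Prec (u s : ℕ → ℝ) (x y : ℝ) : Prop :=
  ∃ j : ℕ, firstIdx u x y = (j : ℕ∞) ∧ (y - x) * s j > 0

lemma mem_gap_iff {x y t : ℝ} :
    t ∈ gapInterval x y ↔ (x < t ∧ t ≤ y) ∨ (y < t ∧ t ≤ x) := by
  simp only [gapInterval, Set.mem_Ioc, min_lt_iff, le_max_iff]
  constructor
  · rintro ⟨h1 | h1, h2 | h2⟩
    · exact absurd h2 (not_le.mpr h1)
    · exact Or.inl ⟨h1, h2⟩
    · exact Or.inr ⟨h1, h2⟩
    · exact absurd h2 (not_le.mpr h1)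
  · rintro (⟨h1, h2⟩ | ⟨h1, h2⟩)
    · exact ⟨Or.inl h1, Or.inr h2⟩
    · exact ⟨Or.inr h1, Or.inl h2⟩

lemma mem_gap_iff' {x y t : ℝ} :
    t ∈ gapInterval x y ↔ ((x < t) ↔ ¬(y < t)) := by
  rw [mem_gap_iff]
  simp only [← not_lt]
  tauto

lemma gap_comm (x y : ℝ) : gapInterval x y = gapInterval y x := by
  simp [gapInterval, min_comm, max_comm]

lemma firstIdx_comm (u : ℕ → ℝ) (x y : ℝ) : firstIdx u x y = firstIdx u y x := by
  rw [firstIdx, firstIdx, gap_comm]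

lemma firstIdx_le (u : ℕ → ℝ) (x y : ℝ) {j : ℕ} (hj : 1 ≤ j)
    (h : u j ∈ gapInterval x y) : firstIdx u x y ≤ j :=
  sInf_le ⟨j, ⟨hj, h⟩, rfl⟩

lemma le_firstIdx (u : ℕ → ℝ) (x y : ℝ) {j : ℕ}
    (h : ∀ k, 1 ≤ k → k < j → u k ∉ gapInterval x y) :
    (j : ℕ∞) ≤ firstIdx u x y := by
  refine le_sInf ?_
  rintro b ⟨k, ⟨hk1, hk2⟩, rfl⟩
  by_contra hlt
  push_neg at hlt
  have hkj : k < j := by exact_mod_cast hlt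
  exact h k hk1 hkj hk2

lemma firstIdx_eq (u : ℕ → ℝ) (x y : ℝ) {j : ℕ} (hj : 1 ≤ j)
    (h : u j ∈ gapInterval x y)
    (hmin : ∀ k, 1 ≤ k → k < j → u k ∉ gapInterval x y) :
    firstIdx u x y = j :=
  le_antisymm (firstIdx_le u x y hj h) (le_firstIdx u x y hmin)

lemma firstIdx_eq_top (u : ℕ → ℝ) (x y : ℝ)
    (h : ∀ j, 1 ≤ j → u j ∉ gapInterval x y) : firstIdx u x y = ⊤ := by
  rw [firstIdx, sInf_eq_top]
  rintro a ⟨k, ⟨hk1, hk2⟩, rfl⟩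
  exact absurd hk2 (h k hk1)

lemma firstIdx_attained (u : ℕ → ℝ) (x y : ℝ) (h : firstIdx u x y ≠ ⊤) :
    ∃ j : ℕ, 1 ≤ j ∧ u j ∈ gapInterval x y ∧ firstIdx u x y = j := by
  have hne : {j : ℕ | 1 ≤ j ∧ u j ∈ gapInterval x y}.Nonempty := by
    by_contra hempty
    rw [Set.not_nonempty_iff_eq_empty] at hempty
    apply h
    rw [firstIdx, hempty]
    simp
  have hmem : sInf {j : ℕ | 1 ≤ j ∧ u j ∈ gapInterval x y} ∈
      {j : ℕ | 1 ≤ j ∧ u j ∈ gapInterval x y} := Nat.sInf_mem hne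
  refine ⟨_, hmem.1, hmem.2, firstIdx_eq u x y hmem.1 hmem.2 ?_⟩
  intro k hk1 hk2 hk3
  exact absurd
    (Nat.sInf_le (show k ∈ {j : ℕ | 1 ≤ j ∧ u j ∈ gapInterval x y} from ⟨hk1, hk3⟩))
    (not_le.mpr hk2)

/-- Each point lies in an even number of the three intervals: if it is in one of them,
it is in (at least) two of them. -/
lemma gap_two {x y z t : ℝ}
    (h : t ∈ gapInterval x y ∨ t ∈ gapInterval y z ∨ t ∈ gapInterval x z) :
    (t ∈ gapInterval x y ∧ t ∈ gapInterval y z) ∨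
    (t ∈ gapInterval x y ∧ t ∈ gapInterval x z) ∨
    (t ∈ gapInterval y z ∧ t ∈ gapInterval x z) := by
  simp only [mem_gap_iff'] at h ⊢
  tauto

/-- for `x, y, z ∈ [0,1]`, among the three indices `i(x,y), i(y,z), i(x,z)`,
the minimum is attained by at least two of them (they can be labeled `a, b, c` with
`a = b ≤ c`); moreover if `i(x,y) = i(y,z) < ∞` then either `x, z ≺ y` or `y ≺ x, z`. -/
theorem firstIdx_min_attained_twice_and_extremum
    (u s : ℕ → ℝ)
    (hu : ∀ j, 1 ≤ j → u j ∈ Set.Ioo (0:ℝ) 1)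
    (hs : ∀ j, 1 ≤ j → s j = 1 ∨ s j = -1)
    (x y z : ℝ) (hx : x ∈ Set.Icc (0:ℝ) 1) (hy : y ∈ Set.Icc (0:ℝ) 1)
    (hz : z ∈ Set.Icc (0:ℝ) 1) :
    ((firstIdx u x y = firstIdx u y z ∧ firstIdx u x y ≤ firstIdx u x z) ∨
     (firstIdx u x y = firstIdx u x z ∧ firstIdx u x y ≤ firstIdx u y z) ∨
     (firstIdx u y z = firstIdx u x z ∧ firstIdx u y z ≤ firstIdx u x y)) ∧
    (firstIdx u x y = firstIdx u y z → firstIdx u x y < ⊤ →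
      ((Prec u s x y ∧ Prec u s z y) ∨ (Prec u s y x ∧ Prec u s y z))) := by
  constructor
  · -- part 1
    set T : Set ℕ := {j : ℕ | 1 ≤ j ∧
      (u j ∈ gapInterval x y ∨ u j ∈ gapInterval y z ∨ u j ∈ gapInterval x z)} with hT
    by_cases hTne : T.Nonempty
    · obtain ⟨hN1, hN2⟩ := Nat.sInf_mem hTne
      set N := sInf T
      have hmin : ∀ k, 1 ≤ k → k < N →
          u k ∉ gapInterval x y ∧ u k ∉ gapInterval y z ∧ u k ∉ gapInterval x z := by
        intro k hk1 hk2
        have hnot : k ∉ T := fun hk => absurd (Nat.sInf_le hk) (not_le.mpr hk2)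
        refine ⟨fun hm => hnot ⟨hk1, Or.inl hm⟩, fun hm => hnot ⟨hk1, Or.inr (Or.inl hm)⟩,
          fun hm => hnot ⟨hk1, Or.inr (Or.inr hm)⟩⟩
      rcases gap_two hN2 with ⟨ha, hb⟩ | ⟨ha, hb⟩ | ⟨ha, hb⟩
      · left
        have e1 : firstIdx u x y = N :=
          firstIdx_eq u x y hN1 ha fun k h1 h2 => (hmin k h1 h2).1
        have e2 : firstIdx u y z = N :=
          firstIdx_eq u y z hN1 hb fun k h1 h2 => (hmin k h1 h2).2.1
        refine ⟨e1.trans e2.symm, ?_⟩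
        rw [e1]
        exact le_firstIdx u x z fun k h1 h2 => (hmin k h1 h2).2.2
      · right; left
        have e1 : firstIdx u x y = N :=
          firstIdx_eq u x y hN1 ha fun k h1 h2 => (hmin k h1 h2).1
        have e2 : firstIdx u x z = N :=
          firstIdx_eq u x z hN1 hb fun k h1 h2 => (hmin k h1 h2).2.2
        refine ⟨e1.trans e2.symm, ?_⟩
        rw [e1]
        exact le_firstIdx u y z fun k h1 h2 => (hmin k h1 h2).2.1
      · right; right
        have e1 : firstIdx u y z = N :=
          firstIdx_eq u y z hN1 ha fun k h1 h2 => (hmin k h1 h2).2.1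
        have e2 : firstIdx u x z = N :=
          firstIdx_eq u x z hN1 hb fun k h1 h2 => (hmin k h1 h2).2.2
        refine ⟨e1.trans e2.symm, ?_⟩
        rw [e1]
        exact le_firstIdx u x y fun k h1 h2 => (hmin k h1 h2).1
    · rw [Set.not_nonempty_iff_eq_empty] at hTne
      have hall : ∀ j, 1 ≤ j →
          u j ∉ gapInterval x y ∧ u j ∉ gapInterval y z ∧ u j ∉ gapInterval x z := by
        intro j hj
        have hnot : j ∉ T := by rw [hTne]; exact Set.notMem_empty j
        refine ⟨fun hm => hnot ⟨hj, Or.inl hm⟩, fun hm => hnot ⟨hj, Or.inr (Or.inl hm)⟩,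
          fun hm => hnot ⟨hj, Or.inr (Or.inr hm)⟩⟩
      have t1 : firstIdx u x y = ⊤ := firstIdx_eq_top u x y fun j hj => (hall j hj).1
      have t2 : firstIdx u y z = ⊤ := firstIdx_eq_top u y z fun j hj => (hall j hj).2.1
      have t3 : firstIdx u x z = ⊤ := firstIdx_eq_top u x z fun j hj => (hall j hj).2.2
      left
      rw [t1, t2, t3]
      exact ⟨rfl, le_rfl⟩
  · -- part 2
    intro heq hlt
    obtain ⟨j, hj1, hjxy, hfxy⟩ := firstIdx_attained u x y (ne_top_of_lt hlt)
    obtain ⟨k, hk1, hkyz, hfyz⟩ := firstIdx_attained u y z (heq ▸ ne_top_of_lt hlt)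
    have hjk : j = k := by
      have : (j : ℕ∞) = (k : ℕ∞) := by rw [← hfxy, ← hfyz, heq]
      exact_mod_cast this
    subst hjk
    have hfyx : firstIdx u y x = (j : ℕ∞) := by rw [firstIdx_comm]; exact hfxy
    have hfzy : firstIdx u z y = (j : ℕ∞) := by rw [firstIdx_comm]; exact hfyz
    rcases mem_gap_iff.mp hjxy with ⟨hx1, hx2⟩ | ⟨hx1, hx2⟩ <;>
        rcases mem_gap_iff.mp hkyz with ⟨hy1, hy2⟩ | ⟨hy1, hy2⟩
    · linarith
    · rcases hs j hj1 with hs1 | hs1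
      · exact Or.inl ⟨⟨j, hfxy, by rw [hs1]; linarith⟩, ⟨j, hfzy, by rw [hs1]; linarith⟩⟩
      · exact Or.inr ⟨⟨j, hfyx, by rw [hs1]; linarith⟩, ⟨j, hfyz, by rw [hs1]; linarith⟩⟩
    · rcases hs j hj1 with hs1 | hs1
      · exact Or.inr ⟨⟨j, hfyx, by rw [hs1]; linarith⟩, ⟨j, hfyz, by rw [hs1]; linarith⟩⟩
      · exact Or.inl ⟨⟨j, hfxy, by rw [hs1]; linarith⟩, ⟨j, hfzy, by rw [hs1]; linarith⟩⟩
    · linarith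
end

section
/- Assume the u_j are pairwise distinct. Then for every integer k ≥ 0: (i) for all x ∈ [0,1], φ_k(x) = Leb({ y ∈ [0,1] : φ_k(y) < φ_k(x) }); (ii) letting 0 = v_0 < v_1 < … < v_k < v_{k+1} = 1 be the increasing rearrangement of {0, u_1, …, u_k, 1}, the function φ_k is constant on each of the intervals [v_0, v_1), [v_1, v_2), …, [v_{k−1}, v_k), [v_k, 1], and takes distinct values on distinct intervals. -/
open MeasureTheory

/-- `φ_k(x) = Leb({ y ∈ [0,1] : y ≺ x and i(x,y) ≤ k })`. -/
noncomputable def phiK (u s : ℕ → ℝ) (k : ℕ) (x : ℝ) : ℝ :=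
  (volume {y : ℝ | y ∈ Set.Icc (0:ℝ) 1 ∧ Prec u s y x ∧ firstIdx u x y ≤ (k : ℕ∞)}).toReal

lemma mem_gap {x y p : ℝ} :
    p ∈ gapInterval x y ↔ (x < p ∧ p ≤ y) ∨ (y < p ∧ p ≤ x) := by
  simp only [gapInterval, Set.mem_Ioc, min_lt_iff, le_max_iff]
  constructor
  · rintro ⟨h1 | h1, h2 | h2⟩
    · exact absurd h2 (not_le.2 h1)
    · exact Or.inl ⟨h1, h2⟩
    · exact Or.inr ⟨h1, h2⟩
    · exact absurd h2 (not_le.2 h1)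
  · rintro (⟨h1, h2⟩ | ⟨h1, h2⟩)
    · exact ⟨Or.inl h1, Or.inr h2⟩
    · exact ⟨Or.inr h1, Or.inl h2⟩

lemma mem_gap' {x y p : ℝ} :
    p ∈ gapInterval x y ↔ ¬((x < p) ↔ (y < p)) := by
  rw [mem_gap]
  constructor
  · rintro (⟨h1, h2⟩ | ⟨h1, h2⟩) hiff
    · exact absurd (hiff.1 h1) (not_lt.2 h2)
    · exact absurd (hiff.2 h1) (not_lt.2 h2)
  · intro h
    by_cases hx : x < p <;> by_cases hy : y < p
    · exact absurd (iff_of_true hx hy) h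
    · exact Or.inl ⟨hx, not_lt.1 hy⟩
    · exact Or.inr ⟨hy, not_lt.1 hx⟩
    · exact absurd (iff_of_false hx hy) h

lemma gap_trans {x y c p : ℝ} (h : p ∉ gapInterval x y) :
    p ∈ gapInterval x c ↔ p ∈ gapInterval y c := by
  simp only [mem_gap'] at *
  tauto

lemma firstIdx_eq_coe {u : ℕ → ℝ} {x y : ℝ} {j : ℕ} :
    firstIdx u x y = (j : ℕ∞) ↔
      (1 ≤ j ∧ u j ∈ gapInterval x y) ∧
        ∀ j' < j, ¬(1 ≤ j' ∧ u j' ∈ gapInterval x y) := by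
  set J : Set ℕ := {j : ℕ | 1 ≤ j ∧ u j ∈ gapInterval x y} with hJ
  constructor
  · intro h
    by_cases hne : J.Nonempty
    · have hmem := Nat.sInf_mem hne
      have heq : firstIdx u x y = ((sInf J : ℕ) : ℕ∞) := by
        refine le_antisymm (sInf_le ⟨_, hmem, rfl⟩) (le_sInf ?_)
        rintro b ⟨j', hj', rfl⟩
        show ((sInf J : ℕ) : ℕ∞) ≤ (j' : ℕ∞)
        exact_mod_cast Nat.sInf_le hj'
      have hj : j = sInf J := by
        have := h.symm.trans heq
        exact_mod_cast this
      subst hj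
      exact ⟨hmem, fun j' hj' => Nat.notMem_of_lt_sInf hj'⟩
    · exfalso
      rw [Set.not_nonempty_iff_eq_empty] at hne
      rw [firstIdx, ← hJ, hne, Set.image_empty, sInf_empty] at h
      exact (ENat.coe_ne_top j) h.symm
  · rintro ⟨hj, hmin⟩
    refine le_antisymm (sInf_le ⟨j, hj, rfl⟩) (le_sInf ?_)
    rintro b ⟨j', hj', rfl⟩
    have hle : j ≤ j' := by
      by_contra hc
      exact hmin j' (not_le.1 hc) hj'
    show (j : ℕ∞) ≤ (j' : ℕ∞)
    exact_mod_cast hle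

/-- The workhorse relation: `Drel u s k x z` means `z ≺ x` with first index `≤ k`,
expressed with the sign condition anchored at `x`. -/
def Drel (u s : ℕ → ℝ) (k : ℕ) (x z : ℝ) : Prop :=
  ∃ j, 1 ≤ j ∧ j ≤ k ∧ u j ∈ gapInterval x z ∧
    (∀ j', j' < j → 1 ≤ j' → u j' ∉ gapInterval x z) ∧
    ((u j ≤ x ∧ 0 < s j) ∨ (x < u j ∧ s j < 0))

lemma sign_iff {x z p : ℝ} (t : ℝ) (hm : p ∈ gapInterval x z) :
    0 < (x - z) * t ↔ ((p ≤ x ∧ 0 < t) ∨ (x < p ∧ t < 0)) := by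
  rcases mem_gap.1 hm with ⟨h1, h2⟩ | ⟨h1, h2⟩
  · have hxz : x - z < 0 := by linarith
    rw [mul_pos_iff]
    constructor
    · rintro (⟨ha, hb⟩ | ⟨ha, hb⟩)
      · linarith
      · exact Or.inr ⟨h1, hb⟩
    · rintro (⟨ha, hb⟩ | ⟨ha, hb⟩)
      · linarith
      · exact Or.inr ⟨hxz, hb⟩
  · have hxz : 0 < x - z := by linarith
    rw [mul_pos_iff]
    constructor
    · rintro (⟨ha, hb⟩ | ⟨ha, hb⟩)
      · exact Or.inl ⟨h2, hb⟩
      · linarith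
    · rintro (⟨ha, hb⟩ | ⟨ha, hb⟩)
      · exact Or.inl ⟨hxz, hb⟩
      · linarith

lemma sign_flip {x z p : ℝ} (t : ℝ) (hm : p ∈ gapInterval x z) :
    ((p ≤ x ∧ 0 < t) ∨ (x < p ∧ t < 0)) ↔ ((z < p ∧ 0 < t) ∨ (p ≤ z ∧ t < 0)) := by
  rcases mem_gap.1 hm with ⟨h1, h2⟩ | ⟨h1, h2⟩
  · constructor
    · rintro (⟨ha, hb⟩ | ⟨ha, hb⟩)
      · linarith
      · exact Or.inr ⟨h2, hb⟩
    · rintro (⟨ha, hb⟩ | ⟨ha, hb⟩)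
      · linarith
      · exact Or.inr ⟨h1, hb⟩
  · constructor
    · rintro (⟨ha, hb⟩ | ⟨ha, hb⟩)
      · exact Or.inl ⟨h1, hb⟩
      · linarith
    · rintro (⟨ha, hb⟩ | ⟨ha, hb⟩)
      · exact Or.inl ⟨h2, hb⟩
      · linarith

lemma anchor_transfer {x y p : ℝ} (t : ℝ) (h : p ∉ gapInterval x y) :
    ((p ≤ x ∧ 0 < t) ∨ (x < p ∧ t < 0)) ↔ ((p ≤ y ∧ 0 < t) ∨ (y < p ∧ t < 0)) := by
  have hiff : (x < p) ↔ (y < p) := by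
    by_contra hc
    exact h (mem_gap'.2 hc)
  constructor
  · rintro (⟨a, b⟩ | ⟨a, b⟩)
    · exact Or.inl ⟨not_lt.1 (fun h => absurd (hiff.2 h) (not_lt.2 a)), b⟩
    · exact Or.inr ⟨hiff.1 a, b⟩
  · rintro (⟨a, b⟩ | ⟨a, b⟩)
    · exact Or.inl ⟨not_lt.1 (fun h => absurd (hiff.1 h) (not_lt.2 a)), b⟩
    · exact Or.inr ⟨hiff.2 a, b⟩

lemma anchors_contra {x y p t : ℝ} (hm : p ∈ gapInterval x y)
    (h1 : (p ≤ x ∧ 0 < t) ∨ (x < p ∧ t < 0))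
    (h2 : (p ≤ y ∧ 0 < t) ∨ (y < p ∧ t < 0)) : False := by
  rw [mem_gap'] at hm
  rcases h1 with ⟨a, b⟩ | ⟨a, b⟩ <;> rcases h2 with ⟨c, d⟩ | ⟨c, d⟩
  · exact hm ⟨fun h => absurd h (not_lt.2 a), fun h => absurd h (not_lt.2 c)⟩
  · linarith
  · linarith
  · exact hm ⟨fun _ => c, fun _ => a⟩

lemma phiK_set_eq (u s : ℕ → ℝ) (k : ℕ) (x : ℝ) :
    {y : ℝ | y ∈ Set.Icc (0:ℝ) 1 ∧ Prec u s y x ∧ firstIdx u x y ≤ (k : ℕ∞)} =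
    {y : ℝ | y ∈ Set.Icc (0:ℝ) 1 ∧ Drel u s k x y} := by
  ext y
  simp only [Set.mem_setOf_eq]
  refine and_congr_right fun _ => ?_
  constructor
  · rintro ⟨⟨j, hfi, hsign⟩, hle⟩
    have hfi2 : firstIdx u x y = (j : ℕ∞) := by rw [firstIdx_comm]; exact hfi
    have hjk : j ≤ k := by
      rw [hfi2] at hle
      exact_mod_cast hle
    obtain ⟨⟨h1, hmem⟩, hmin⟩ := firstIdx_eq_coe.1 hfi2
    refine ⟨j, h1, hjk, hmem, ?_, (sign_iff (s j) hmem).1 hsign⟩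
    intro j' hj' h1' hc
    exact hmin j' hj' ⟨h1', hc⟩
  · rintro ⟨j, h1, hjk, hmem, hmin, hsgn⟩
    have hfi2 : firstIdx u x y = (j : ℕ∞) := by
      rw [firstIdx_eq_coe]
      exact ⟨⟨h1, hmem⟩, fun j' hj' hc => hmin j' hj' hc.1 hc.2⟩
    refine ⟨⟨j, ?_, (sign_iff (s j) hmem).2 hsgn⟩, ?_⟩
    · rw [firstIdx_comm]; exact hfi2
    · rw [hfi2]; exact_mod_cast hjk

lemma phiK_eq_D (u s : ℕ → ℝ) (k : ℕ) (x : ℝ) :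
    phiK u s k x = (volume {y : ℝ | y ∈ Set.Icc (0:ℝ) 1 ∧ Drel u s k x y}).toReal := by
  rw [phiK, phiK_set_eq]

lemma Drel_congr_right {u s : ℕ → ℝ} {k : ℕ} {x z z' : ℝ}
    (h : ∀ j, 1 ≤ j → j ≤ k → u j ∉ gapInterval z z') :
    Drel u s k x z → Drel u s k x z' := by
  rintro ⟨j, h1, h2, hmem, hmin, hsgn⟩
  refine ⟨j, h1, h2, ?_, ?_, hsgn⟩
  · rw [gap_comm] at hmem ⊢
    exact (gap_trans (h j h1 h2)).1 hmem
  · intro j' hj' h1' hc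
    apply hmin j' hj' h1'
    rw [gap_comm] at hc ⊢
    exact (gap_trans (h j' h1' (le_trans (le_of_lt hj') h2))).2 hc

lemma Drel_congr_left {u s : ℕ → ℝ} {k : ℕ} {x x' z : ℝ}
    (h : ∀ j, 1 ≤ j → j ≤ k → u j ∉ gapInterval x x') :
    Drel u s k x z → Drel u s k x' z := by
  rintro ⟨j, h1, h2, hmem, hmin, hsgn⟩
  have hmem' : u j ∈ gapInterval x' z := (gap_trans (h j h1 h2)).1 hmem
  refine ⟨j, h1, h2, hmem', ?_, ?_⟩
  · intro j' hj' h1' hc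
    exact hmin j' hj' h1' ((gap_trans (h j' h1' (le_trans (le_of_lt hj') h2))).2 hc)
  · exact (sign_flip (s j) hmem').2 ((sign_flip (s j) hmem).1 hsgn)

/-- Transitivity: `z ≺ y` and `y ≺ x` imply `z ≺ x` (with indices `≤ k`). -/
lemma Drel_trans {u s : ℕ → ℝ} {k : ℕ} {x y z : ℝ}
    (hxy : Drel u s k x y) (hyz : Drel u s k y z) : Drel u s k x z := by
  obtain ⟨j1, h11, h12, hmem1, hmin1, hsgn1⟩ := hxy
  obtain ⟨j0, h01, h02, hmem0, hmin0, hsgn0⟩ := hyz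
  rcases lt_trichotomy j0 j1 with hlt | heq | hgt
  · -- first index of (y,z) comes earlier: it also works for (x,z)
    have hnot : u j0 ∉ gapInterval x y := hmin1 j0 hlt h01
    refine ⟨j0, h01, h02, (gap_trans hnot).2 hmem0, ?_, ?_⟩
    · intro j' hj' h1' hc
      exact hmin0 j' hj' h1' ((gap_trans (hmin1 j' (lt_trans hj' hlt) h1')).1 hc)
    · exact (anchor_transfer (s j0) hnot).2 hsgn0
  · subst heq
    exact absurd hsgn0 (fun h => anchors_contra hmem1 hsgn1 h)
  · -- first index of (x,y) comes earlier
    have hnot : u j1 ∉ gapInterval y z := hmin0 j1 hgt h11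
    have hmem' : u j1 ∈ gapInterval x z := by
      rw [gap_comm] at hmem1 ⊢
      exact (gap_trans hnot).1 hmem1
    refine ⟨j1, h11, h12, hmem', ?_, hsgn1⟩
    intro j' hj' h1' hc
    exact hmin0 j' (lt_trans hj' hgt) h1' ((gap_trans (hmin1 j' hj' h1')).1 hc)

lemma Drel_not_both {u s : ℕ → ℝ} {k : ℕ} {x y : ℝ}
    (h1 : Drel u s k x y) (h2 : Drel u s k y x) : False := by
  obtain ⟨j1, h11, h12, hmem1, hmin1, hsgn1⟩ := h1
  obtain ⟨j2, h21, h22, hmem2, hmin2, hsgn2⟩ := h2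
  have hj : j1 = j2 := by
    rcases lt_trichotomy j1 j2 with h | h | h
    · exact absurd (by rw [gap_comm] at hmem1; exact hmem1) (hmin2 j1 h h11)
    · exact h
    · exact absurd (by rw [gap_comm] at hmem2; exact hmem2) (hmin1 j2 h h21)
  subst hj
  exact anchors_contra hmem1 hsgn1 hsgn2

lemma Drel_total {u s : ℕ → ℝ} {k : ℕ} (hs : ∀ j, 1 ≤ j → s j = 1 ∨ s j = -1) {x y : ℝ}
    (hne : ∃ j, 1 ≤ j ∧ j ≤ k ∧ u j ∈ gapInterval x y) :
    Drel u s k x y ∨ Drel u s k y x := by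
  obtain ⟨j0, hj01, hj0k, hj0mem⟩ := hne
  set J : Set ℕ := {j : ℕ | 1 ≤ j ∧ u j ∈ gapInterval x y} with hJ
  have hne' : J.Nonempty := ⟨j0, hj01, hj0mem⟩
  set j := sInf J with hj
  have hjmem : j ∈ J := Nat.sInf_mem hne'
  have hjk : j ≤ k := le_trans (Nat.sInf_le ⟨hj01, hj0mem⟩) hj0k
  have hmin : ∀ j', j' < j → 1 ≤ j' → u j' ∉ gapInterval x y := by
    intro j' hj' h1' hc
    exact Nat.notMem_of_lt_sInf hj' ⟨h1', hc⟩
  have hmin' : ∀ j', j' < j → 1 ≤ j' → u j' ∉ gapInterval y x := by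
    intro j' hj' h1'
    rw [gap_comm]
    exact hmin j' hj' h1'
  have hmemyx : u j ∈ gapInterval y x := by rw [gap_comm]; exact hjmem.2
  have hxor : ¬((x < u j) ↔ (y < u j)) := mem_gap'.1 hjmem.2
  rcases hs j hjmem.1 with hs1 | hs1
  · by_cases hx : x < u j
    · refine Or.inr ⟨j, hjmem.1, hjk, hmemyx, hmin', Or.inl ⟨?_, by rw [hs1]; norm_num⟩⟩
      by_contra hc
      exact hxor ⟨fun _ => not_le.1 hc, fun _ => hx⟩
    · exact Or.inl ⟨j, hjmem.1, hjk, hjmem.2, hmin, Or.inl ⟨not_lt.1 hx, by rw [hs1]; norm_num⟩⟩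
  · by_cases hx : x < u j
    · exact Or.inl ⟨j, hjmem.1, hjk, hjmem.2, hmin, Or.inr ⟨hx, by rw [hs1]; norm_num⟩⟩
    · refine Or.inr ⟨j, hjmem.1, hjk, hmemyx, hmin', Or.inr ⟨?_, by rw [hs1]; norm_num⟩⟩
      by_contra hc
      exact hxor ⟨fun h => absurd h hx, fun h => absurd h hc⟩

/-- The `i`-th piece of the partition of `[0,1]` determined by `v`. -/
def piece (k : ℕ) (v : ℕ → ℝ) (i : ℕ) : Set ℝ :=
  if i = k then Set.Icc (v k) 1 else Set.Ico (v i) (v (i+1))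

lemma piece_L1 {u : ℕ → ℝ} {k : ℕ} {v : ℕ → ℝ}
    (hvle : ∀ i i', i ≤ i' → i' ≤ k+1 → v i ≤ v i')
    (huv : ∀ j, 1 ≤ j → j ≤ k → ∃ i, 1 ≤ i ∧ i ≤ k ∧ v i = u j)
    {m : ℕ} (hm : m ≤ k) {x x' : ℝ} (hx : x ∈ piece k v m) (hx' : x' ∈ piece k v m)
    {j : ℕ} (hj1 : 1 ≤ j) (hjk : j ≤ k) : u j ∉ gapInterval x x' := by
  obtain ⟨i, hi1, hik, hvi⟩ := huv j hj1 hjk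
  intro hmem
  by_cases hmk : m = k
  · subst hmk
    rw [piece, if_pos rfl] at hx hx'
    have hik' : v i ≤ v m := hvle i m hik (Nat.le_succ_of_le hm)
    rcases mem_gap.1 hmem with ⟨h1, h2⟩ | ⟨h1, h2⟩
    · linarith [hx.1]
    · linarith [hx'.1]
  · rw [piece, if_neg hmk] at hx hx'
    rcases mem_gap.1 hmem with ⟨h1, h2⟩ | ⟨h1, h2⟩
    · by_cases hi : i ≤ m
      · have : v i ≤ v m := hvle i m hi (Nat.le_succ_of_le hm)
        linarith [hx.1]
      · have : v (m+1) ≤ v i := hvle (m+1) i (not_le.1 hi) (Nat.le_succ_of_le hik)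
        linarith [hx'.2]
    · by_cases hi : i ≤ m
      · have : v i ≤ v m := hvle i m hi (Nat.le_succ_of_le hm)
        linarith [hx'.1]
      · have : v (m+1) ≤ v i := hvle (m+1) i (not_le.1 hi) (Nat.le_succ_of_le hik)
        linarith [hx.2]

lemma piece_L2 {u : ℕ → ℝ} {k : ℕ} {v : ℕ → ℝ}
    (hvle : ∀ i i', i ≤ i' → i' ≤ k+1 → v i ≤ v i')
    (hvu : ∀ i, 1 ≤ i → i ≤ k → ∃ j, 1 ≤ j ∧ j ≤ k ∧ u j = v i)
    {m m' : ℕ} (hmm : m < m') (hm' : m' ≤ k)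
    {x y : ℝ} (hx : x ∈ piece k v m) (hy : y ∈ piece k v m') :
    ∃ j, 1 ≤ j ∧ j ≤ k ∧ u j ∈ gapInterval x y := by
  have hmk : m ≠ k := by omega
  rw [piece, if_neg hmk] at hx
  have hy1 : v m' ≤ y := by
    by_cases hm'k : m' = k
    · subst hm'k; rw [piece, if_pos rfl] at hy; exact hy.1
    · rw [piece, if_neg hm'k] at hy; exact hy.1
  obtain ⟨j, hj1, hjk, hvj⟩ := hvu (m+1) (Nat.succ_le_succ (Nat.zero_le m)) (by omega)
  have hle : v (m+1) ≤ v m' := hvle (m+1) m' hmm (Nat.le_succ_of_le hm')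
  refine ⟨j, hj1, hjk, mem_gap.2 (Or.inl ⟨?_, ?_⟩)⟩
  · rw [hvj]; exact hx.2
  · rw [hvj]; linarith

lemma piece_subset {k : ℕ} {v : ℕ → ℝ}
    (hv0 : v 0 = 0) (hv1 : v (k+1) = 1)
    (hvle : ∀ i i', i ≤ i' → i' ≤ k+1 → v i ≤ v i')
    {m : ℕ} (hm : m ≤ k) : piece k v m ⊆ Set.Icc (0:ℝ) 1 := by
  intro z hz
  by_cases hmk : m = k
  · rw [piece, if_pos hmk] at hz
    have h1 : v 0 ≤ v k := hvle 0 k (Nat.zero_le _) (Nat.le_succ _)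
    exact ⟨by linarith [hz.1, h1, hv0], hz.2⟩
  · rw [piece, if_neg hmk] at hz
    have h1 : v 0 ≤ v m := hvle 0 m (Nat.zero_le _) (Nat.le_succ_of_le hm)
    have h2 : v (m+1) ≤ v (k+1) := hvle (m+1) (k+1) (Nat.succ_le_succ hm) le_rfl
    constructor
    · linarith [hz.1, h1, hv0]
    · linarith [hz.2, h2, hv1]

lemma piece_exists {k : ℕ} {v : ℕ → ℝ}
    (hv0 : v 0 = 0) (hv1 : v (k+1) = 1)
    {z : ℝ} (hz : z ∈ Set.Icc (0:ℝ) 1) :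
    ∃ m, m ≤ k ∧ z ∈ piece k v m := by
  classical
  set m := Nat.findGreatest (fun i => v i ≤ z) k with hm
  have hmk : m ≤ k := Nat.findGreatest_le k
  have hvm : v m ≤ z := by
    have := Nat.findGreatest_spec (P := fun i => v i ≤ z) (Nat.zero_le k)
      (show v 0 ≤ z by rw [hv0]; exact hz.1)
    exact this
  refine ⟨m, hmk, ?_⟩
  by_cases hmkeq : m = k
  · rw [piece, if_pos hmkeq]
    exact ⟨hmkeq ▸ hvm, hz.2⟩
  · rw [piece, if_neg hmkeq]
    refine ⟨hvm, ?_⟩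
    have hlt : m < m + 1 := Nat.lt_succ_self m
    have h1 : ¬ (v (m+1) ≤ z) :=
      Nat.findGreatest_is_greatest hlt (by omega)
    exact not_le.1 h1

lemma phi_const {u s : ℕ → ℝ} {k : ℕ} {v : ℕ → ℝ}
    (hvle : ∀ i i', i ≤ i' → i' ≤ k+1 → v i ≤ v i')
    (huv : ∀ j, 1 ≤ j → j ≤ k → ∃ i, 1 ≤ i ∧ i ≤ k ∧ v i = u j)
    {m : ℕ} (hm : m ≤ k) {x x' : ℝ} (hx : x ∈ piece k v m) (hx' : x' ∈ piece k v m) :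
    phiK u s k x = phiK u s k x' := by
  rw [phiK_eq_D, phiK_eq_D]
  congr 2
  ext z
  simp only [Set.mem_setOf_eq]
  refine and_congr_right fun _ => ?_
  constructor
  · exact Drel_congr_left (fun j hj1 hjk => piece_L1 hvle huv hm hx hx' hj1 hjk)
  · exact Drel_congr_left (fun j hj1 hjk => piece_L1 hvle huv hm hx' hx hj1 hjk)

lemma phi_lt {u s : ℕ → ℝ} {k : ℕ} {v : ℕ → ℝ}
    (hv0 : v 0 = 0) (hv1 : v (k+1) = 1)
    (hvle : ∀ i i', i ≤ i' → i' ≤ k+1 → v i ≤ v i')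
    (hvlt : ∀ i i', i < i' → i' ≤ k+1 → v i < v i')
    (huv : ∀ j, 1 ≤ j → j ≤ k → ∃ i, 1 ≤ i ∧ i ≤ k ∧ v i = u j)
    {m' : ℕ} (hm' : m' ≤ k) {x y : ℝ} (hy : y ∈ piece k v m')
    (hD : Drel u s k x y) : phiK u s k y < phiK u s k x := by
  set Sy := {z : ℝ | z ∈ Set.Icc (0:ℝ) 1 ∧ Drel u s k y z} with hSy
  set Sx := {z : ℝ | z ∈ Set.Icc (0:ℝ) 1 ∧ Drel u s k x z} with hSx
  have hsub1 : Sy ⊆ Sx := fun z hz => ⟨hz.1, Drel_trans hD hz.2⟩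
  have hsub2 : piece k v m' ⊆ Sx := by
    intro z hz
    refine ⟨piece_subset hv0 hv1 hvle hm' hz, ?_⟩
    exact Drel_congr_right (fun j hj1 hjk => piece_L1 hvle huv hm' hy hz hj1 hjk) hD
  have hdisj : Disjoint Sy (piece k v m') := by
    rw [Set.disjoint_left]
    rintro z ⟨hz1, j, hj1, hjk, hmem, -, -⟩ hz2
    exact piece_L1 hvle huv hm' hy hz2 hj1 hjk hmem
  have hmeas : MeasurableSet (piece k v m') := by
    rw [piece]; split
    · exact measurableSet_Icc
    · exact measurableSet_Ico
  have hvol : volume (Sy ∪ piece k v m') = volume Sy + volume (piece k v m') :=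
    measure_union hdisj hmeas
  have hle : volume (Sy ∪ piece k v m') ≤ volume Sx :=
    measure_mono (Set.union_subset hsub1 hsub2)
  have hIccfin : volume (Set.Icc (0:ℝ) 1) ≠ ⊤ := measure_Icc_lt_top.ne
  have hfinSy : volume Sy ≠ ⊤ :=
    ne_top_of_le_ne_top hIccfin (measure_mono fun z hz => hz.1)
  have hfinSx : volume Sx ≠ ⊤ :=
    ne_top_of_le_ne_top hIccfin (measure_mono fun z hz => hz.1)
  have hppos : 0 < volume (piece k v m') := by
    by_cases hmk : m' = k
    · rw [piece, if_pos hmk, Real.volume_Icc]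
      have : v k < 1 := by
        have := hvlt k (k+1) (Nat.lt_succ_self k) le_rfl
        linarith [hv1]
      rw [ENNReal.ofReal_pos]
      linarith [hmk ▸ this]
    · rw [piece, if_neg hmk, Real.volume_Ico]
      have : v m' < v (m'+1) := hvlt m' (m'+1) (Nat.lt_succ_self m') (by omega)
      rw [ENNReal.ofReal_pos]
      linarith
  have hlt : volume Sy < volume Sx := by
    calc volume Sy < volume Sy + volume (piece k v m') :=
          ENNReal.lt_add_right hfinSy hppos.ne'
    _ = volume (Sy ∪ piece k v m') := hvol.symm
    _ ≤ volume Sx := hle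
  rw [phiK_eq_D, phiK_eq_D]
  exact (ENNReal.toReal_lt_toReal hfinSy hfinSx).2 hlt

/-- assume the `u_j` pairwise distinct, and let
`0 = v_0 < v_1 < … < v_k < v_{k+1} = 1` be the increasing rearrangement of `{0, u_1, …, u_k, 1}`.
Then (i) for all `x ∈ [0,1]`, `φ_k(x) = Leb({ y ∈ [0,1] : φ_k(y) < φ_k(x) })`;
(ii) `φ_k` is constant on each of the intervals `[v_0,v_1), …, [v_{k−1},v_k), [v_k,1]`
and takes distinct values on distinct intervals. -/
theorem phiK_selfdescribing_and_step
    (u s : ℕ → ℝ)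
    (hu : ∀ j, 1 ≤ j → u j ∈ Set.Ioo (0:ℝ) 1)
    (hs : ∀ j, 1 ≤ j → s j = 1 ∨ s j = -1)
    (hdist : ∀ j k, 1 ≤ j → 1 ≤ k → u j = u k → j = k)
    (k : ℕ) (v : ℕ → ℝ)
    (hmono : StrictMonoOn v (Set.Icc 0 (k+1)))
    (hrange : v '' Set.Icc 0 (k+1) =
      insert (0:ℝ) (insert (1:ℝ) {x : ℝ | ∃ j, 1 ≤ j ∧ j ≤ k ∧ u j = x})) :
    (∀ x ∈ Set.Icc (0:ℝ) 1,
      phiK u s k x =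
        (volume {y : ℝ | y ∈ Set.Icc (0:ℝ) 1 ∧ phiK u s k y < phiK u s k x}).toReal) ∧
    (∀ i ≤ k, ∀ x ∈ (if i = k then Set.Icc (v k) 1 else Set.Ico (v i) (v (i+1))),
      ∀ y ∈ (if i = k then Set.Icc (v k) 1 else Set.Ico (v i) (v (i+1))),
        phiK u s k x = phiK u s k y) ∧
    (∀ i ≤ k, ∀ i' ≤ k, i ≠ i' →
      ∀ x ∈ (if i = k then Set.Icc (v k) 1 else Set.Ico (v i) (v (i+1))),
      ∀ y ∈ (if i' = k then Set.Icc (v k) 1 else Set.Ico (v i') (v (i'+1))),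
        phiK u s k x ≠ phiK u s k y) := by
  -- monotonicity consequences
  have hvle : ∀ i i', i ≤ i' → i' ≤ k+1 → v i ≤ v i' := by
    intro i i' h h'
    exact hmono.monotoneOn ⟨Nat.zero_le _, le_trans h h'⟩ ⟨Nat.zero_le _, h'⟩ h
  have hvlt : ∀ i i', i < i' → i' ≤ k+1 → v i < v i' := by
    intro i i' h h'
    exact hmono ⟨Nat.zero_le _, le_trans (le_of_lt h) h'⟩ ⟨Nat.zero_le _, h'⟩ h
  -- endpoints
  have hv0 : v 0 = 0 := by
    have h0img : (0:ℝ) ∈ v '' Set.Icc 0 (k+1) := by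
      rw [hrange]; exact Set.mem_insert _ _
    obtain ⟨i, hi, hvi⟩ := h0img
    have hv0le : v 0 ≤ 0 := hvi ▸ hvle 0 i (Nat.zero_le _) hi.2
    have hv0mem : v 0 ∈ insert (0:ℝ) (insert (1:ℝ) {x : ℝ | ∃ j, 1 ≤ j ∧ j ≤ k ∧ u j = x}) := by
      rw [← hrange]; exact ⟨0, ⟨Nat.zero_le _, Nat.zero_le _⟩, rfl⟩
    simp only [Set.mem_insert_iff, Set.mem_setOf_eq] at hv0mem
    rcases hv0mem with h | h | ⟨j, hj1, hjk, hj⟩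
    · exact h
    · linarith
    · have := (hu j hj1).1
      linarith [hj ▸ this]
  have hv1 : v (k+1) = 1 := by
    have h1img : (1:ℝ) ∈ v '' Set.Icc 0 (k+1) := by
      rw [hrange]; exact Set.mem_insert_of_mem _ (Set.mem_insert _ _)
    obtain ⟨i, hi, hvi⟩ := h1img
    have hv1ge : 1 ≤ v (k+1) := hvi ▸ hvle i (k+1) hi.2 le_rfl
    have hv1mem : v (k+1) ∈ insert (0:ℝ) (insert (1:ℝ) {x : ℝ | ∃ j, 1 ≤ j ∧ j ≤ k ∧ u j = x}) := by
      rw [← hrange]; exact ⟨k+1, ⟨Nat.zero_le _, le_rfl⟩, rfl⟩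
    simp only [Set.mem_insert_iff, Set.mem_setOf_eq] at hv1mem
    rcases hv1mem with h | h | ⟨j, hj1, hjk, hj⟩
    · linarith
    · exact h
    · have := (hu j hj1).2
      linarith [hj ▸ this]
  -- correspondence between `u`'s and interior `v`'s
  have huv : ∀ j, 1 ≤ j → j ≤ k → ∃ i, 1 ≤ i ∧ i ≤ k ∧ v i = u j := by
    intro j hj1 hjk
    have hmem : u j ∈ v '' Set.Icc 0 (k+1) := by
      rw [hrange]
      exact Set.mem_insert_of_mem _ (Set.mem_insert_of_mem _ ⟨j, hj1, hjk, rfl⟩)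
    obtain ⟨i, hi, hvi⟩ := hmem
    have hi0 : i ≠ 0 := by
      intro h
      rw [h, hv0] at hvi
      linarith [(hu j hj1).1]
    have hik1 : i ≠ k+1 := by
      intro h
      rw [h, hv1] at hvi
      linarith [(hu j hj1).2]
    have hik : i ≤ k + 1 := hi.2
    exact ⟨i, by omega, by omega, hvi⟩
  have hvu : ∀ i, 1 ≤ i → i ≤ k → ∃ j, 1 ≤ j ∧ j ≤ k ∧ u j = v i := by
    intro i hi1 hik
    have hmem : v i ∈ insert (0:ℝ) (insert (1:ℝ) {x : ℝ | ∃ j, 1 ≤ j ∧ j ≤ k ∧ u j = x}) := by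
      rw [← hrange]; exact ⟨i, ⟨Nat.zero_le _, by omega⟩, rfl⟩
    simp only [Set.mem_insert_iff, Set.mem_setOf_eq] at hmem
    rcases hmem with h | h | h
    · have := hvlt 0 i hi1 (by omega)
      rw [hv0] at this
      linarith
    · have := hvlt i (k+1) (by omega) le_rfl
      rw [hv1] at this
      linarith
    · exact h
  -- totality across distinct pieces
  have hD_or : ∀ m m', m ≤ k → m' ≤ k → m ≠ m' →
      ∀ x ∈ piece k v m, ∀ y ∈ piece k v m', Drel u s k x y ∨ Drel u s k y x := by
    intro m m' hm hm' hne x hx y hy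
    rcases Nat.lt_or_ge m m' with h | h
    · exact Drel_total hs (piece_L2 hvle hvu h hm' hx hy)
    · have h' : m' < m := by omega
      exact (Drel_total hs (piece_L2 hvle hvu h' hm hy hx)).symm
  refine ⟨?_, ?_, ?_⟩
  · -- self-describing property
    intro x hx
    obtain ⟨m, hm, hxP⟩ := piece_exists hv0 hv1 hx
    have hset : {y : ℝ | y ∈ Set.Icc (0:ℝ) 1 ∧ phiK u s k y < phiK u s k x} =
        {y : ℝ | y ∈ Set.Icc (0:ℝ) 1 ∧ Drel u s k x y} := by
      ext y
      simp only [Set.mem_setOf_eq]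
      refine and_congr_right fun hy => ?_
      obtain ⟨m', hm', hyP⟩ := piece_exists hv0 hv1 hy
      by_cases hmm : m' = m
      · subst hmm
        have heq : phiK u s k y = phiK u s k x := phi_const hvle huv hm' hyP hxP
        apply iff_of_false
        · rw [heq]; exact lt_irrefl _
        · rintro ⟨j, hj1, hjk, hmem, -, -⟩
          exact piece_L1 hvle huv hm' hxP hyP hj1 hjk hmem
      · rcases hD_or m m' hm hm' (Ne.symm hmm) x hxP y hyP with hD | hD
        · exact iff_of_true (phi_lt hv0 hv1 hvle hvlt huv hm' hyP hD) hD
        · apply iff_of_false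
          · exact not_lt.2 (le_of_lt (phi_lt hv0 hv1 hvle hvlt huv hm hxP hD))
          · exact fun hD' => Drel_not_both hD' hD
    rw [hset, ← phiK_eq_D]
  · -- constancy on pieces
    intro i hi x hx y hy
    exact phi_const hvle huv hi (show x ∈ piece k v i from hx) (show y ∈ piece k v i from hy)
  · -- distinct values on distinct pieces
    intro i hi i' hi' hne x hx y hy
    replace hx : x ∈ piece k v i := hx
    replace hy : y ∈ piece k v i' := hy
    rcases hD_or i i' hi hi' hne x hx y hy with hD | hD
    · exact ne_of_gt (phi_lt hv0 hv1 hvle hvlt huv hi' hy hD)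
    · exact ne_of_lt (phi_lt hv0 hv1 hvle hvlt huv hi hx hD)
end
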